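/- Let G_1 and G_2 be finite simple graphs sharing the vertex set I = V(G_1) ∩ V(G_2) and the edges induced by I. Then G_1 and G_2 are simultaneous interval graphs if and only if there exists a set E' of edges, each joining a vertex of V(G_1) − I to a vertex of V(G_2) − I, such that the graph G_1 ∪ G_2 ∪ E' on the vertex set V(G_1) ∪ V(G_2) is an interval graph. -/

import Mathlib

variable {U : Type*}

/-- `Q` is a maximal clique of `G` among the cliques contained in the
vertex set `W`; i.e. a maximal clique of the induced subgraph `G[W]`. -/
def IsMaxCliqueOn (G : SimpleGraph U) (W : Finset U) (Q : Finset U) : Prop :=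
  Q ⊆ W ∧ G.IsClique (Q : Set U) ∧
    ∀ R : Finset U, R ⊆ W → G.IsClique (R : Set U) → Q ⊆ R → Q = R

/-- `S` is a clique ordering of the graph `G` regarded as a graph on the vertex
set `W`: a finite sequence of (possibly empty) cliques contained in `W`,
containing every maximal clique of `G[W]`, in which the indices of cliques
containing any fixed vertex are consecutive. -/
def IsCliqueOrderingOn (G : SimpleGraph U) (W : Finset U) (S : List (Finset U)) : Prop :=
  (∀ Q ∈ S, Q ⊆ W ∧ G.IsClique (Q : Set U)) ∧
  (∀ Q : Finset U, IsMaxCliqueOn G W Q → Q ∈ S) ∧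
  (∀ v : U, ∀ i j k : ℕ, i ≤ j → j ≤ k → k < S.length →
    v ∈ S.getD i ∅ → v ∈ S.getD k ∅ → v ∈ S.getD j ∅)

/-- `G1` (on vertex set `V1`) and `G2` (on vertex set `V2`) are simultaneous
interval graphs: they admit interval representations (by nonempty closed real
intervals, adjacency iff intersecting) that assign the same interval to every
vertex of `I = V1 ∩ V2`. -/
def SimultaneousIntervalGraphs [DecidableEq U] (V1 V2 : Finset U) (G1 G2 : SimpleGraph U) : Prop :=
  ∃ a1 b1 a2 b2 : U → ℝ,
    (∀ v ∈ V1, a1 v ≤ b1 v) ∧ (∀ v ∈ V2, a2 v ≤ b2 v) ∧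
    (∀ u ∈ V1, ∀ v ∈ V1, u ≠ v →
      (G1.Adj u v ↔ (Set.Icc (a1 u) (b1 u) ∩ Set.Icc (a1 v) (b1 v)).Nonempty)) ∧
    (∀ u ∈ V2, ∀ v ∈ V2, u ≠ v →
      (G2.Adj u v ↔ (Set.Icc (a2 u) (b2 u) ∩ Set.Icc (a2 v) (b2 v)).Nonempty)) ∧
    (∀ v ∈ V1 ∩ V2, a1 v = a2 v ∧ b1 v = b2 v)

/-- `G`, regarded as a graph on the vertex set `W`, is an interval graph. -/
def IsIntervalGraphOn (G : SimpleGraph U) (W : Finset U) : Prop :=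
  ∃ a b : U → ℝ, (∀ v ∈ W, a v ≤ b v) ∧
    ∀ u ∈ W, ∀ v ∈ W, u ≠ v →
      (G.Adj u v ↔ (Set.Icc (a u) (b u) ∩ Set.Icc (a v) (b v)).Nonempty)

/-- Two graphs sharing `I = V1 ∩ V2` are simultaneous interval graphs iff one can
add edges, each joining a vertex of `V1 − I` to a vertex of `V2 − I`, so that the
union becomes an interval graph on `V1 ∪ V2`. -/
theorem simultaneous_iff_augmentation {U : Type*} [Fintype U] [DecidableEq U]
    (V1 V2 : Finset U) (G1 G2 : SimpleGraph U)
    (hG1 : ∀ u v : U, G1.Adj u v → u ∈ V1 ∧ v ∈ V1)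
    (hG2 : ∀ u v : U, G2.Adj u v → u ∈ V2 ∧ v ∈ V2)
    (hI : ∀ u ∈ V1 ∩ V2, ∀ v ∈ V1 ∩ V2, G1.Adj u v ↔ G2.Adj u v) :
    SimultaneousIntervalGraphs V1 V2 G1 G2 ↔
      ∃ G : SimpleGraph U,
        (∀ u v : U, G1.Adj u v → G.Adj u v) ∧
        (∀ u v : U, G2.Adj u v → G.Adj u v) ∧
        (∀ u v : U, G.Adj u v → ¬ G1.Adj u v → ¬ G2.Adj u v →
          (u ∈ V1 \ V2 ∧ v ∈ V2 \ V1) ∨ (u ∈ V2 \ V1 ∧ v ∈ V1 \ V2)) ∧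
        IsIntervalGraphOn G (V1 ∪ V2) := by
  classical
  constructor
  · rintro ⟨a1, b1, a2, b2, h1, h2, hadj1, hadj2, hag⟩
    set a : U → ℝ := fun v => if v ∈ V1 then a1 v else a2 v with ha
    set b : U → ℝ := fun v => if v ∈ V1 then b1 v else b2 v with hb
    have haV1 : ∀ v ∈ V1, a v = a1 v ∧ b v = b1 v := by
      intro v hv; simp [ha, hb, hv]
    have haV2 : ∀ v ∈ V2, a v = a2 v ∧ b v = b2 v := by
      intro v hv
      by_cases h : v ∈ V1
      · have := hag v (Finset.mem_inter.mpr ⟨h, hv⟩)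
        simp [ha, hb, h, this.1, this.2]
      · simp [ha, hb, h]
    refine ⟨⟨fun u v => u ≠ v ∧ u ∈ V1 ∪ V2 ∧ v ∈ V1 ∪ V2 ∧
        (Set.Icc (a u) (b u) ∩ Set.Icc (a v) (b v)).Nonempty, ?_, ?_⟩, ?_, ?_, ?_, ?_⟩
    · constructor; rintro u v ⟨hne, hu, hv, hint⟩
      exact ⟨hne.symm, hv, hu, by rwa [Set.inter_comm]⟩
    · constructor; rintro u ⟨hne, -⟩; exact hne rfl
    · intro u v huv
      obtain ⟨hu, hv⟩ := hG1 u v huv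
      have hne := huv.ne
      refine ⟨hne, Finset.mem_union_left _ hu, Finset.mem_union_left _ hv, ?_⟩
      rw [(haV1 u hu).1, (haV1 u hu).2, (haV1 v hv).1, (haV1 v hv).2]
      exact (hadj1 u hu v hv hne).mp huv
    · intro u v huv
      obtain ⟨hu, hv⟩ := hG2 u v huv
      have hne := huv.ne
      refine ⟨hne, Finset.mem_union_right _ hu, Finset.mem_union_right _ hv, ?_⟩
      rw [(haV2 u hu).1, (haV2 u hu).2, (haV2 v hv).1, (haV2 v hv).2]
      exact (hadj2 u hu v hv hne).mp huv
    · rintro u v ⟨hne, hu, hv, hint⟩ hn1 hn2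
      have key1 : ¬ (u ∈ V1 ∧ v ∈ V1) := by
        rintro ⟨hu1, hv1⟩
        apply hn1
        refine (hadj1 u hu1 v hv1 hne).mpr ?_
        rwa [(haV1 u hu1).1, (haV1 u hu1).2, (haV1 v hv1).1, (haV1 v hv1).2] at hint
      have key2 : ¬ (u ∈ V2 ∧ v ∈ V2) := by
        rintro ⟨hu2, hv2⟩
        apply hn2
        refine (hadj2 u hu2 v hv2 hne).mpr ?_
        rwa [(haV2 u hu2).1, (haV2 u hu2).2, (haV2 v hv2).1, (haV2 v hv2).2] at hint
      rw [Finset.mem_union] at hu hv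
      rcases hu with hu1 | hu2
      · left
        have hv2 : v ∈ V2 := by
          rcases hv with hv1 | hv2
          · exact absurd ⟨hu1, hv1⟩ key1
          · exact hv2
        have hu2 : u ∉ V2 := fun h => key2 ⟨h, hv2⟩
        have hv1 : v ∉ V1 := fun h => key1 ⟨hu1, h⟩
        exact ⟨Finset.mem_sdiff.mpr ⟨hu1, hu2⟩, Finset.mem_sdiff.mpr ⟨hv2, hv1⟩⟩
      · right
        have hv1 : v ∈ V1 := by
          rcases hv with hv1 | hv2
          · exact hv1
          · exact absurd ⟨hu2, hv2⟩ key2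
        have hu1 : u ∉ V1 := fun h => key1 ⟨h, hv1⟩
        have hv2 : v ∉ V2 := fun h => key2 ⟨hu2, h⟩
        exact ⟨Finset.mem_sdiff.mpr ⟨hu2, hu1⟩, Finset.mem_sdiff.mpr ⟨hv1, hv2⟩⟩
    · refine ⟨a, b, ?_, ?_⟩
      · intro v hv
        rcases Finset.mem_union.mp hv with h | h
        · rw [(haV1 v h).1, (haV1 v h).2]; exact h1 v h
        · rw [(haV2 v h).1, (haV2 v h).2]; exact h2 v h
      · intro u hu v hv hne
        constructor
        · rintro ⟨-, -, -, hint⟩; exact hint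
        · intro hint; exact ⟨hne, hu, hv, hint⟩
  · rintro ⟨G, hsub1, hsub2, hE, a, b, hab, hadj⟩
    refine ⟨a, b, a, b, fun v hv => hab v (Finset.mem_union_left _ hv),
      fun v hv => hab v (Finset.mem_union_right _ hv), ?_, ?_, fun v _ => ⟨rfl, rfl⟩⟩
    · intro u hu v hv hne
      constructor
      · intro h
        exact (hadj u (Finset.mem_union_left _ hu) v (Finset.mem_union_left _ hv) hne).mp
          (hsub1 u v h)
      · intro hint
        have hG : G.Adj u v :=
          (hadj u (Finset.mem_union_left _ hu) v (Finset.mem_union_left _ hv) hne).mpr hint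
        by_cases h1 : G1.Adj u v
        · exact h1
        by_cases h2 : G2.Adj u v
        · obtain ⟨hu2, hv2⟩ := hG2 u v h2
          exact (hI u (Finset.mem_inter.mpr ⟨hu, hu2⟩) v (Finset.mem_inter.mpr ⟨hv, hv2⟩)).mpr h2
        rcases hE u v hG h1 h2 with ⟨-, hv'⟩ | ⟨hu', -⟩
        · exact absurd hv (Finset.mem_sdiff.mp hv').2
        · exact absurd hu (Finset.mem_sdiff.mp hu').2
    · intro u hu v hv hne
      constructor
      · intro h
        exact (hadj u (Finset.mem_union_right _ hu) v (Finset.mem_union_right _ hv) hne).mp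
          (hsub2 u v h)
      · intro hint
        have hG : G.Adj u v :=
          (hadj u (Finset.mem_union_right _ hu) v (Finset.mem_union_right _ hv) hne).mpr hint
        by_cases h2 : G2.Adj u v
        · exact h2
        by_cases h1 : G1.Adj u v
        · obtain ⟨hu1, hv1⟩ := hG1 u v h1
          exact (hI u (Finset.mem_inter.mpr ⟨hu1, hu⟩) v (Finset.mem_inter.mpr ⟨hv1, hv⟩)).mp h1
        rcases hE u v hG h1 h2 with ⟨hu', -⟩ | ⟨-, hv'⟩
        · exact absurd hu (Finset.mem_sdiff.mp hu').2
        · exact absurd hv (Finset.mem_sdiff.mp hv').2
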